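/- arXiv:1812.03454 — 3 statements merged into one kernel-verified Lean document; each statement's English description precedes it below -/
import Mathlib

section
/- Every N×N complex matrix A with ‖A‖ ≤ 1 can be written as A = (1/2)U₀ + (1/2)U₁ where U₀ and U₁ are unitary matrices. -/
open scoped Matrix.Norms.L2Operator

open Matrix ContinuousLinearMap
open scoped InnerProductSpace

set_option synthInstance.maxHeartbeats 400000 in
lemma exists_unitary_factor {N : ℕ} (A P : Matrix (Fin N) (Fin N) ℂ)
    (hP : star P = P) (hPP : P * P = Aᴴ * A) :
    ∃ V : Matrix (Fin N) (Fin N) ℂ, star V * V = 1 ∧ A = V * P := by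
  set E := EuclideanSpace ℂ (Fin N)
  let φ := Matrix.toEuclideanCLM (𝕜 := ℂ) (n := Fin N)
  set a := φ A with ha
  set p := φ P with hp
  have hpadj : adjoint p = p := by
    rw [← ContinuousLinearMap.star_eq_adjoint, hp, ← map_star, hP]
  have hcomp : adjoint a ∘L a = p ∘L p := by
    rw [← ContinuousLinearMap.star_eq_adjoint, ← ContinuousLinearMap.mul_def,
      ← ContinuousLinearMap.mul_def, ha, hp, ← map_star, ← _root_.map_mul,
      ← _root_.map_mul, Matrix.star_eq_conjTranspose, ← hPP]
  have hinner : ∀ x : E, ⟪a x, a x⟫_ℂ = ⟪p x, p x⟫_ℂ := by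
    intro x
    rw [← ContinuousLinearMap.adjoint_inner_right, ← ContinuousLinearMap.adjoint_inner_right,
      hpadj]
    rw [show adjoint a (a x) = p (p x) from DFunLike.congr_fun hcomp x]
  have hnorm : ∀ x : E, ‖a x‖ = ‖p x‖ := by
    intro x
    have h2 : RCLike.re ⟪a x, a x⟫_ℂ = RCLike.re ⟪p x, p x⟫_ℂ := by rw [hinner x]
    have h3 : ‖a x‖ ^ 2 = ‖p x‖ ^ 2 := by
      rw [inner_self_eq_norm_sq, inner_self_eq_norm_sq] at h2; exact h2
    rw [← Real.sqrt_sq (norm_nonneg (a x)), ← Real.sqrt_sq (norm_nonneg (p x)), h3]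
  set al : E →ₗ[ℂ] E := (a : E →ₗ[ℂ] E)
  set pl : E →ₗ[ℂ] E := (p : E →ₗ[ℂ] E)
  have hker : LinearMap.ker pl ≤ LinearMap.ker al := by
    intro x hx
    have hx' : p x = 0 := hx
    have : ‖a x‖ = 0 := by rw [hnorm, hx', norm_zero]
    exact LinearMap.mem_ker.mpr (norm_eq_zero.mp this)
  let L0 : (E ⧸ LinearMap.ker pl) →ₗ[ℂ] E := (LinearMap.ker pl).liftQ al hker
  let Leq := LinearMap.quotKerEquivRange pl
  let L : LinearMap.range pl →ₗ[ℂ] E := L0 ∘ₗ (Leq.symm : _ →ₗ[ℂ] _)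
  have key : ∀ x : E, L ⟨pl x, LinearMap.mem_range_self pl x⟩ = al x := by
    intro x
    have h1 : Leq (Submodule.Quotient.mk x) = ⟨pl x, LinearMap.mem_range_self pl x⟩ :=
      Subtype.ext (LinearMap.quotKerEquivRange_apply_mk pl x)
    have h2 : Leq.symm ⟨pl x, LinearMap.mem_range_self pl x⟩ = Submodule.Quotient.mk x := by
      rw [← h1, LinearEquiv.symm_apply_apply]
    show L0 (Leq.symm ⟨pl x, LinearMap.mem_range_self pl x⟩) = al x
    rw [h2]
    exact Submodule.liftQ_apply _ _ _
  let LI : LinearMap.range pl →ₗᵢ[ℂ] E :=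
    ⟨L, by
      rintro ⟨-, x, rfl⟩
      rw [key]
      exact hnorm x⟩
  let Lext : E →ₗᵢ[ℂ] E := LI.extend
  have hext : ∀ x : E, Lext (pl x) = al x := by
    intro x
    have := LI.extend_apply ⟨pl x, LinearMap.mem_range_self pl x⟩
    rw [this]
    exact key x
  let V' : E →L[ℂ] E := Lext.toContinuousLinearMap
  have hV'p : V' ∘L p = a := ContinuousLinearMap.ext hext
  have hV'iso : adjoint V' ∘L V' = 1 := by
    refine ContinuousLinearMap.ext fun x => ext_inner_right ℂ fun y => ?_
    rw [ContinuousLinearMap.comp_apply, ContinuousLinearMap.adjoint_inner_left]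
    have h5 : ⟪V' x, V' y⟫_ℂ = ⟪Lext x, Lext y⟫_ℂ := rfl
    rw [h5, Lext.inner_map_map]
    rfl
  refine ⟨φ.symm V', ?_, ?_⟩
  · rw [← map_star φ.symm V', ← _root_.map_mul φ.symm (star V') V', ContinuousLinearMap.star_eq_adjoint,
      ContinuousLinearMap.mul_def, hV'iso, _root_.map_one]
  · calc A = φ.symm (φ A) := (StarAlgEquiv.symm_apply_apply φ A).symm
    _ = φ.symm (V' ∘L p) := by rw [← ha, ← hV'p]
    _ = φ.symm V' * P := by
        rw [← ContinuousLinearMap.mul_def, _root_.map_mul, hp, StarAlgEquiv.symm_apply_apply]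

theorem contraction_avg_two_unitaries {N : ℕ}
    (A : Matrix (Fin N) (Fin N) ℂ) (hA : ‖A‖ ≤ 1) :
    ∃ U₀ U₁ : Matrix (Fin N) (Fin N) ℂ,
      U₀ ∈ Matrix.unitaryGroup (Fin N) ℂ ∧
      U₁ ∈ Matrix.unitaryGroup (Fin N) ℂ ∧
      A = (1 / 2 : ℂ) • U₀ + (1 / 2 : ℂ) • U₁ := by
  have hH : (Aᴴ * A).IsHermitian := Matrix.isHermitian_conjTranspose_mul_self A
  set lam := hH.eigenvalues with hlam
  set u : Matrix (Fin N) (Fin N) ℂ := (hH.eigenvectorUnitary : Matrix (Fin N) (Fin N) ℂ) with huu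
  have hu1 : star u * u = 1 := Unitary.coe_star_mul_self _
  -- eigenvalue bounds
  have hbound : ∀ i, 0 ≤ lam i ∧ lam i ≤ 1 := by
    intro i
    set v : EuclideanSpace ℂ (Fin N) := hH.eigenvectorBasis i with hv
    have hv1 : ‖v‖ = 1 := (hH.eigenvectorBasis).orthonormal.1 i
    set aC := Matrix.toEuclideanCLM (𝕜 := ℂ) A with haC
    have hCv : Matrix.toEuclideanCLM (𝕜 := ℂ) (Aᴴ * A) v = (lam i : ℂ) • v := by
      have hmv := hH.mulVec_eigenvectorBasis i
      ext j
      have h0 : (Matrix.toEuclideanCLM (𝕜 := ℂ) (Aᴴ * A) v) j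
          = ((Aᴴ * A) *ᵥ ⇑(hH.eigenvectorBasis i)) j := rfl
      rw [h0, hmv]
      simp [Complex.real_smul]
      rfl
    have hinner : (lam i : ℂ) = ((‖aC v‖ : ℝ) : ℂ) ^ 2 := by
      have h1 : ⟪v, Matrix.toEuclideanCLM (𝕜 := ℂ) (Aᴴ * A) v⟫_ℂ = (lam i : ℂ) := by
        rw [hCv, inner_smul_right, inner_self_eq_norm_sq_to_K, hv1]
        push_cast
        ring
      have h2 : Matrix.toEuclideanCLM (𝕜 := ℂ) (Aᴴ * A) = adjoint aC ∘L aC := by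
        rw [← ContinuousLinearMap.star_eq_adjoint, ← ContinuousLinearMap.mul_def, haC,
          ← Matrix.star_eq_conjTranspose, ← map_star, ← _root_.map_mul]
      rw [h2] at h1
      rw [← h1, ContinuousLinearMap.comp_apply, ContinuousLinearMap.adjoint_inner_right,
        inner_self_eq_norm_sq_to_K]
      norm_cast
    have hlam_eq : lam i = ‖aC v‖ ^ 2 := by exact_mod_cast hinner
    have hle : ‖aC v‖ ≤ 1 := by
      calc ‖aC v‖ ≤ ‖aC‖ * ‖v‖ := aC.le_opNorm v
      _ = ‖A‖ := by rw [hv1, mul_one]; rfl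
      _ ≤ 1 := hA
    refine ⟨by rw [hlam_eq]; positivity, ?_⟩
    rw [hlam_eq]
    calc ‖aC v‖ ^ 2 ≤ 1 ^ 2 := pow_le_pow_left₀ (norm_nonneg _) hle 2
    _ = 1 := one_pow 2
  -- the diagonal pieces
  set s : Fin N → ℝ := fun i => Real.sqrt (lam i) with hs
  set t : Fin N → ℝ := fun i => Real.sqrt (1 - lam i) with ht
  set c₀ : Fin N → ℂ := fun i => (s i : ℂ) + Complex.I * (t i : ℂ) with hc₀
  set c₁ : Fin N → ℂ := fun i => (s i : ℂ) - Complex.I * (t i : ℂ) with hc₁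
  have hs2 : ∀ i, (s i : ℂ) * s i = (lam i : ℂ) := by
    intro i
    rw [hs]
    norm_cast
    exact Real.mul_self_sqrt (hbound i).1
  have ht2 : ∀ i, (t i : ℂ) * t i = 1 - (lam i : ℂ) := by
    intro i
    rw [ht]
    norm_cast
    rw [Real.mul_self_sqrt (by linarith [(hbound i).2])]
  have hcc : ∀ i, c₁ i * c₀ i = 1 := fun i => by
    rw [hc₀, hc₁]
    linear_combination hs2 i + ht2 i - (t i : ℂ) * (t i) * Complex.I_mul_I
  have hcc' : ∀ i, c₀ i * c₁ i = 1 := fun i => by rw [mul_comm]; exact hcc i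
  have hconj₀ : star c₀ = c₁ := by
    funext i
    simp only [hc₀, hc₁, Pi.star_apply, star_add, star_mul', Complex.star_def,
      Complex.conj_ofReal, Complex.conj_I]
    ring
  have hconj₁ : star c₁ = c₀ := by rw [← hconj₀, star_star]
  -- matrices
  set P : Matrix (Fin N) (Fin N) ℂ := u * diagonal (fun i => (s i : ℂ)) * star u with hP
  set W₀ : Matrix (Fin N) (Fin N) ℂ := u * diagonal c₀ * star u with hW₀
  set W₁ : Matrix (Fin N) (Fin N) ℂ := u * diagonal c₁ * star u with hW₁
  have hmulform : ∀ f g : Fin N → ℂ,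
      (u * diagonal f * star u) * (u * diagonal g * star u)
        = u * diagonal (f * g) * star u := by
    intro f g
    simp only [Matrix.mul_assoc]
    rw [← Matrix.mul_assoc (star u) u (diagonal g * star u), hu1, Matrix.one_mul,
      ← Matrix.mul_assoc (diagonal f) (diagonal g) (star u), Matrix.diagonal_mul_diagonal]
    rfl
  have hstarform : ∀ f : Fin N → ℂ,
      star (u * diagonal f * star u) = u * diagonal (star f) * star u := by
    intro f
    rw [StarMul.star_mul, star_star, StarMul.star_mul, Matrix.star_eq_conjTranspose (diagonal f),
      Matrix.diagonal_conjTranspose, Matrix.mul_assoc]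
  have hPstar : star P = P := by
    rw [hP, hstarform]
    have : (star fun i => ((s i : ℝ) : ℂ)) = fun i => ((s i : ℝ) : ℂ) := by
      funext i
      simp [Pi.star_apply, Complex.star_def, Complex.conj_ofReal]
    rw [this]
  have hPP : P * P = Aᴴ * A := by
    rw [hP, hmulform]
    have hd : (fun i => (s i : ℂ) * s i) = (RCLike.ofReal ∘ lam) := by
      funext i
      rw [hs2 i]
      rfl
    have hd2 : (fun i => (s i : ℂ)) * (fun i => (s i : ℂ)) = (fun i => (s i : ℂ) * s i) := rfl
    rw [hd2, hd]
    exact (hH.spectral_theorem).symm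
  have hW₀u : star W₀ * W₀ = 1 := by
    rw [hW₀, hstarform, hconj₀, hmulform]
    have : c₁ * c₀ = fun _ => (1 : ℂ) := funext hcc
    rw [this, Matrix.diagonal_one, Matrix.mul_one]
    exact Unitary.coe_mul_star_self _
  have hW₁u : star W₁ * W₁ = 1 := by
    rw [hW₁, hstarform, hconj₁, hmulform]
    have : c₀ * c₁ = fun _ => (1 : ℂ) := funext hcc'
    rw [this, Matrix.diagonal_one, Matrix.mul_one]
    exact Unitary.coe_mul_star_self _
  have havg : P = (1 / 2 : ℂ) • W₀ + (1 / 2 : ℂ) • W₁ := by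
    rw [hP, hW₀, hW₁]
    have hd : diagonal (fun i => ((s i : ℝ) : ℂ))
        = (1 / 2 : ℂ) • diagonal c₀ + (1 / 2 : ℂ) • diagonal c₁ := by
      rw [← Matrix.diagonal_smul, ← Matrix.diagonal_smul, Matrix.diagonal_add]
      congr 1
      funext i
      simp only [hc₀, hc₁, Pi.add_apply, Pi.smul_apply, smul_eq_mul]
      ring
    rw [hd, Matrix.mul_add, Matrix.add_mul, Matrix.mul_smul, Matrix.mul_smul,
      Matrix.smul_mul, Matrix.smul_mul]
  obtain ⟨V, hV1, hV2⟩ := exists_unitary_factor A P hPstar hPP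
  refine ⟨V * W₀, V * W₁, ?_, ?_, ?_⟩
  · rw [Matrix.mem_unitaryGroup_iff']
    rw [StarMul.star_mul, Matrix.mul_assoc, ← Matrix.mul_assoc (star V), hV1, Matrix.one_mul]
    exact hW₀u
  · rw [Matrix.mem_unitaryGroup_iff']
    rw [StarMul.star_mul, Matrix.mul_assoc, ← Matrix.mul_assoc (star V), hV1, Matrix.one_mul]
    exact hW₁u
  · rw [hV2, havg, Matrix.mul_add, Matrix.mul_smul, Matrix.mul_smul]
end

section
/- For every natural number n, Lⁿ = [[T_n(H), -(I-H²)^{1/2}·U_{n-1}(H)], [(I-H²)^{1/2}·U_{n-1}(H), T_n(H)]], where T_n and U_{n-1} are the Chebyshev polynomials of the first and second kind. -/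
open Matrix Polynomial
open scoped Matrix.Norms.L2Operator ComplexOrder

noncomputable def Matrix.PosSemidef.sqrt {n : Type*} [Fintype n] [DecidableEq n] {𝕜 : Type*}
    [RCLike 𝕜] {A : Matrix n n 𝕜} (hA : A.PosSemidef) : Matrix n n 𝕜 :=
  hA.1.eigenvectorUnitary.1 * diagonal ((↑) ∘ (√·) ∘ hA.1.eigenvalues) *
    (star hA.1.eigenvectorUnitary : Matrix n n 𝕜)

lemma Matrix.PosSemidef.sqrt_eq_cfc {N : ℕ} {A : Matrix (Fin N) (Fin N) ℂ} (hA : A.PosSemidef) :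
    hA.sqrt = cfc Real.sqrt A := by
  rw [hA.1.cfc_eq, Matrix.IsHermitian.cfc, Unitary.conjStarAlgAut_apply]
  rfl

lemma Matrix.PosSemidef.sqrt_mul_self {N : ℕ} {A : Matrix (Fin N) (Fin N) ℂ} (hA : A.PosSemidef) :
    hA.sqrt * hA.sqrt = A := by
  have hsa : IsSelfAdjoint A := hA.1
  rw [hA.sqrt_eq_cfc, ← cfc_mul Real.sqrt Real.sqrt A]
  conv_rhs => rw [← cfc_id' ℝ A]
  refine cfc_congr fun x hx => ?_
  rw [hA.1.spectrum_real_eq_range_eigenvalues] at hx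
  obtain ⟨i, rfl⟩ := hx
  exact Real.mul_self_sqrt (hA.eigenvalues_nonneg i)

lemma commute_aeval' {R A : Type*} [CommSemiring R] [Semiring A] [Algebra R A]
    {a b : A} (h : Commute a b) (p : R[X]) : Commute a (Polynomial.aeval b p) := by
  induction p using Polynomial.induction_on' with
  | add p q hp hq => simpa [map_add] using hp.add_right hq
  | monomial n c =>
    rw [Polynomial.aeval_monomial]
    exact (Algebra.commute_algebraMap_right c a).mul_right (h.pow_right n)

lemma sqrt_commute {N : ℕ} (H : Matrix (Fin N) (Fin N) ℂ) (hH : H.IsHermitian)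
    (hpsd : (1 - H ^ 2).PosSemidef) : Commute hpsd.sqrt H := by
  rw [hpsd.sqrt_eq_cfc]
  refine Commute.cfc_real ?_ _
  exact ((Commute.one_left H).sub_left ((Commute.refl H).pow_left 2))

theorem block_matrix_L_pow_chebyshev {N : ℕ}
    (H : Matrix (Fin N) (Fin N) ℂ) (hH : H.IsHermitian) (hnorm : ‖H‖ ≤ 1)
    (hpsd : (1 - H ^ 2).PosSemidef) (n : ℕ) :
    Matrix.fromBlocks H (-hpsd.sqrt) hpsd.sqrt H ^ n =
      Matrix.fromBlocks
        (Polynomial.aeval H (Polynomial.Chebyshev.T ℂ (n : ℤ)))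
        (-(hpsd.sqrt * Polynomial.aeval H (Polynomial.Chebyshev.U ℂ ((n : ℤ) - 1))))
        (hpsd.sqrt * Polynomial.aeval H (Polynomial.Chebyshev.U ℂ ((n : ℤ) - 1)))
        (Polynomial.aeval H (Polynomial.Chebyshev.T ℂ (n : ℤ))) := by
  induction n with
  | zero =>
    rw [pow_zero]
    push_cast
    rw [Polynomial.Chebyshev.U_neg_one, Polynomial.Chebyshev.T_zero, _root_.map_one,
      _root_.map_zero, mul_zero, neg_zero, Matrix.fromBlocks_one]
  | succ n ih =>
    have hc : Commute hpsd.sqrt H := sqrt_commute H hH hpsd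
    set S := hpsd.sqrt with hSdef
    have hS2 : S * S = 1 - H ^ 2 := hpsd.sqrt_mul_self
    set tn := Polynomial.aeval H (Polynomial.Chebyshev.T ℂ (n : ℤ)) with htn
    set un := Polynomial.aeval H (Polynomial.Chebyshev.U ℂ ((n : ℤ) - 1)) with hun
    have hcT : S * tn = tn * S := commute_aeval' hc _
    have hcU : S * un = un * S := commute_aeval' hc _
    have hHT : H * tn = tn * H := commute_aeval' (Commute.refl H) _
    have hHU : H * un = un * H := commute_aeval' (Commute.refl H) _
    rw [pow_succ, ih, Matrix.fromBlocks_multiply]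
    push_cast
    rw [add_sub_cancel_right]
    have hTpoly := Polynomial.Chebyshev.T_eq_X_mul_T_sub_pol_U ℂ ((n : ℤ) - 1)
    rw [show (n : ℤ) - 1 + 2 = (n : ℤ) + 1 by ring,
      show (n : ℤ) - 1 + 1 = (n : ℤ) by ring] at hTpoly
    have hUpoly := Polynomial.Chebyshev.U_eq_X_mul_U_add_T ℂ ((n : ℤ) - 1)
    rw [show (n : ℤ) - 1 + 1 = (n : ℤ) by ring] at hUpoly
    have hT' : Polynomial.aeval H (Polynomial.Chebyshev.T ℂ ((n : ℤ) + 1))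
        = H * tn - (1 - H ^ 2) * un := by
      rw [hTpoly]
      simp only [map_sub, _root_.map_mul, _root_.map_one, map_pow, Polynomial.aeval_X, htn, hun]
    have hU' : Polynomial.aeval H (Polynomial.Chebyshev.U ℂ (n : ℤ)) = H * un + tn := by
      rw [hUpoly]
      simp only [map_add, _root_.map_mul, Polynomial.aeval_X, htn, hun]
    have hblk1 : tn * H + -(S * un) * S = H * tn - (1 - H ^ 2) * un := by
      rw [← hS2, ← hHT, Matrix.neg_mul, Matrix.mul_assoc S un S, ← hcU, ← Matrix.mul_assoc,
        ← sub_eq_add_neg]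
    have hblk2 : tn * -S + -(S * un) * H = -(S * (H * un + tn)) := by
      rw [Matrix.mul_neg, ← hcT, Matrix.neg_mul, Matrix.mul_assoc S un H, ← hHU,
        Matrix.mul_add, neg_add, ← Matrix.mul_assoc]
      abel
    have hblk3 : S * un * H + tn * S = S * (H * un + tn) := by
      rw [Matrix.mul_assoc S un H, ← hHU, ← hcT, Matrix.mul_add, ← Matrix.mul_assoc]
    have hblk4 : S * un * -S + tn * H = H * tn - (1 - H ^ 2) * un := by
      rw [Matrix.mul_neg, ← hS2, ← hHT, Matrix.mul_assoc S un S, ← hcU, ← Matrix.mul_assoc,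
        sub_eq_add_neg]
      abel
    rw [hT', hU', hblk1, hblk2, hblk3, hblk4]
end

section
/- For a Hermitian contraction H and a unit vector of the form (φ, 0) in ℂ^{2N}, applying L^n yields (T_n(H)φ, (I-H²)^{1/2}U_{n-1}(H)φ); in particular, the projection of L^n(φ,0) onto the first block is T_n(H)φ. -/
open Matrix
open scoped Matrix.Norms.L2Operator ComplexOrder

open scoped MatrixOrder in
private lemma psd_sqrt_eq_cfc {n : Type*} [Fintype n] [DecidableEq n] {A : Matrix n n ℂ}
    (hA : A.PosSemidef) : hA.sqrt = CFC.sqrt A := by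
  rw [CFC.sqrt_eq_real_sqrt A hA.nonneg, cfcₙ_eq_cfc, hA.1.cfc_eq, Matrix.IsHermitian.cfc,
    Unitary.conjStarAlgAut_apply]
  rfl

open scoped MatrixOrder in
private lemma psd_sqrt_mul_self {n : Type*} [Fintype n] [DecidableEq n] {A : Matrix n n ℂ}
    (hA : A.PosSemidef) : hA.sqrt * hA.sqrt = A := by
  rw [psd_sqrt_eq_cfc hA]
  exact CFC.sqrt_mul_sqrt_self A hA.nonneg

open scoped MatrixOrder in
private lemma psd_eq_sqrt_of_sq_eq {n : Type*} [Fintype n] [DecidableEq n] {A B : Matrix n n ℂ}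
    (hB : B.PosSemidef) (hA : A.PosSemidef) (h : B ^ 2 = A) : B = hA.sqrt := by
  rw [psd_sqrt_eq_cfc hA]
  exact (CFC.sqrt_unique (by rw [← pow_two]; exact h) hB.nonneg).symm

open Polynomial in
open scoped InnerProductSpace in
private lemma eig_sq_le_one {N : ℕ} (H : Matrix (Fin N) (Fin N) ℂ) (hH : H.IsHermitian)
    (hpsd : (1 - H ^ 2).PosSemidef) (i : Fin N) : hH.eigenvalues i ^ 2 ≤ 1 := by
  set v : Fin N → ℂ := ⇑(hH.eigenvectorBasis i) with hv
  have hmv : H *ᵥ v = (hH.eigenvalues i : ℂ) • v := by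
    rw [hH.mulVec_eigenvectorBasis i]
    ext j; simp [Complex.real_smul, v]
  have hvv : star v ⬝ᵥ v = 1 := by
    have h1 : ⟪hH.eigenvectorBasis i, hH.eigenvectorBasis i⟫_ℂ = 1 := by
      rw [inner_self_eq_norm_sq_to_K, hH.eigenvectorBasis.orthonormal.1 i]
      norm_num
    rw [EuclideanSpace.inner_eq_star_dotProduct] at h1
    rw [dotProduct_comm]
    simpa [v] using h1
  have key := hpsd.dotProduct_mulVec_nonneg v
  have hc : (1 - H ^ 2) *ᵥ v = (1 - (hH.eigenvalues i : ℂ) ^ 2) • v := by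
    rw [sub_mulVec, one_mulVec, pow_two, ← mulVec_mulVec, hmv, mulVec_smul, hmv]
    ext j
    simp [sub_smul, smul_smul, pow_two]
    ring
  rw [hc, dotProduct_smul, hvv, smul_eq_mul, mul_one] at key
  have : (0:ℂ) ≤ ((1 - hH.eigenvalues i ^ 2 : ℝ) : ℂ) := by push_cast; exact key
  rw [Complex.zero_le_real] at this
  linarith

private lemma sqrt_comm_aux {N : ℕ} (H : Matrix (Fin N) (Fin N) ℂ) (hH : H.IsHermitian)
    (hpsd : (1 - H ^ 2).PosSemidef) :
    H * hpsd.sqrt = hpsd.sqrt * H := by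
  have heig : ∀ i, hH.eigenvalues i ^ 2 ≤ 1 := eig_sq_le_one H hH hpsd
  set U : Matrix (Fin N) (Fin N) ℂ := (hH.eigenvectorUnitary : Matrix (Fin N) (Fin N) ℂ) with hU
  have hUU : star U * U = 1 := Unitary.coe_star_mul_self hH.eigenvectorUnitary
  have hUU' : U * star U = 1 := Unitary.coe_mul_star_self hH.eigenvectorUnitary
  set d : Fin N → ℝ := hH.eigenvalues with hd
  set D : Matrix (Fin N) (Fin N) ℂ := diagonal (fun i => (Real.sqrt (1 - d i ^ 2) : ℂ)) with hD
  set E : Matrix (Fin N) (Fin N) ℂ := diagonal ((↑) ∘ d) with hE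
  have key : ∀ A B : Matrix (Fin N) (Fin N) ℂ,
      (U * A * star U) * (U * B * star U) = U * (A * B) * star U := by
    intro A B
    rw [show (U * A * star U) * (U * B * star U) = U * (A * (star U * U) * B) * star U by
      noncomm_ring, hUU]
    noncomm_ring
  have hspec : H = U * E * star U := hH.spectral_theorem
  have hDpsd : (U * D * star U).PosSemidef := by
    have hDp : D.PosSemidef := by
      rw [hD]
      refine posSemidef_diagonal_iff.mpr fun i => ?_
      rw [Complex.zero_le_real]
      exact Real.sqrt_nonneg _
    exact hDp.mul_mul_conjTranspose_same U
  have hDD : D * D = 1 - E * E := by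
    rw [hD, hE, diagonal_mul_diagonal, diagonal_mul_diagonal]
    ext i j
    rcases eq_or_ne i j with rfl | hne
    · have h0 : (0:ℝ) ≤ 1 - d i ^ 2 := by linarith [heig i]
      simp [one_apply_eq, ← Complex.ofReal_mul, Real.mul_self_sqrt h0, Function.comp]
      push_cast
      ring
    · simp [diagonal_apply_ne _ hne, one_apply_ne hne]
  have hsq : (U * D * star U) ^ 2 = 1 - H ^ 2 := by
    rw [pow_two, key, hDD, hspec, pow_two, key]
    rw [mul_sub, sub_mul, mul_one, hUU']
  have hS : U * D * star U = hpsd.sqrt := psd_eq_sqrt_of_sq_eq hDpsd hpsd hsq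
  have hcomm : E * D = D * E := by
    rw [hD, hE, diagonal_mul_diagonal, diagonal_mul_diagonal]
    simp [mul_comm]
  calc H * hpsd.sqrt = (U * E * star U) * (U * D * star U) := by rw [hS, ← hspec]
    _ = U * (E * D) * star U := key E D
    _ = U * (D * E) * star U := by rw [hcomm]
    _ = (U * D * star U) * (U * E * star U) := (key D E).symm
    _ = hpsd.sqrt * H := by rw [hS, ← hspec]

theorem L_pow_on_first_block {N : ℕ}
    (H : Matrix (Fin N) (Fin N) ℂ) (hH : H.IsHermitian) (hnorm : ‖H‖ ≤ 1)
    (hpsd : (1 - H ^ 2).PosSemidef) (φ : Fin N → ℂ) (n : ℕ) :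
    (Matrix.fromBlocks H (-hpsd.sqrt) hpsd.sqrt H ^ n).mulVec (Sum.elim φ 0) =
      Sum.elim
        ((Polynomial.aeval H (Polynomial.Chebyshev.T ℂ (n : ℤ))).mulVec φ)
        ((hpsd.sqrt *
            Polynomial.aeval H (Polynomial.Chebyshev.U ℂ ((n : ℤ) - 1))).mulVec φ) := by
  have hcomm : H * hpsd.sqrt = hpsd.sqrt * H := sqrt_comm_aux H hH hpsd
  have hSS : hpsd.sqrt * hpsd.sqrt = 1 - H ^ 2 := psd_sqrt_mul_self hpsd
  induction n with
  | zero =>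
    simp [Polynomial.Chebyshev.T_zero, show ((0:ℕ):ℤ) - 1 = -1 by ring,
      Polynomial.Chebyshev.U_neg_one]
  | succ n ih =>
    rw [pow_succ', ← mulVec_mulVec, ih, fromBlocks_mulVec]
    set A := Polynomial.aeval H (Polynomial.Chebyshev.T ℂ (n : ℤ)) with hA
    set B := Polynomial.aeval H (Polynomial.Chebyshev.U ℂ ((n : ℤ) - 1)) with hB
    have hcast : ((n + 1 : ℕ) : ℤ) = (n : ℤ) + 1 := by push_cast; ring
    have hTid : Polynomial.aeval H (Polynomial.Chebyshev.T ℂ ((n : ℤ) + 1))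
        = H * A - (1 - H ^ 2) * B := by
      have h := Polynomial.Chebyshev.T_eq_X_mul_T_sub_pol_U ℂ ((n : ℤ) - 1)
      rw [show ((n:ℤ) - 1) + 2 = (n:ℤ) + 1 by ring, show ((n:ℤ) - 1) + 1 = (n:ℤ) by ring] at h
      rw [h, map_sub, _root_.map_mul, _root_.map_mul, map_sub, Polynomial.aeval_one, map_pow,
        Polynomial.aeval_X, hA, hB]
    have hUid : Polynomial.aeval H (Polynomial.Chebyshev.U ℂ (n : ℤ))
        = H * B + A := by
      have h := Polynomial.Chebyshev.U_eq_X_mul_U_add_T ℂ ((n : ℤ) - 1)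
      rw [show ((n:ℤ) - 1) + 1 = (n:ℤ) by ring] at h
      rw [h, map_add, _root_.map_mul, Polynomial.aeval_X, hA, hB]
    rw [hcast, show ((n:ℤ) + 1) - 1 = (n:ℤ) by ring, hTid, hUid]
    simp only [Sum.elim_comp_inl, Sum.elim_comp_inr]
    have e1 : H *ᵥ (A *ᵥ φ) + (-hpsd.sqrt) *ᵥ ((hpsd.sqrt * B) *ᵥ φ)
        = (H * A - (1 - H ^ 2) * B) *ᵥ φ := by
      rw [mulVec_mulVec, mulVec_mulVec, ← add_mulVec, neg_mul, ← mul_assoc, hSS,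
        ← sub_eq_add_neg]
    have e2 : hpsd.sqrt *ᵥ (A *ᵥ φ) + H *ᵥ ((hpsd.sqrt * B) *ᵥ φ)
        = (hpsd.sqrt * (H * B + A)) *ᵥ φ := by
      rw [mulVec_mulVec, mulVec_mulVec, ← add_mulVec, ← mul_assoc, hcomm, mul_assoc,
        ← mul_add, add_comm A (H * B)]
    rw [e1, e2]
end
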